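/- Let g, h be Schwartz functions on ℝ² with |g(x)| ≤ C_N (1+|x|)^(-N) and |h(x)| ≤ C_N (1+|x|)^(-N) for all N. Let A = diag(4,2), B = [[1,1],[0,1]], and for a multi-index (j,ℓ,k) set g_{j,ℓ,k}(x) = 2^(3j/2) g(B^ℓ A^j x - k). Then for all N > 2 and all i ∈ {j-1, j, j+1} with i ≥ 0, j ≥ 0, |ℓ| ≤ 2^j, |m| ≤ 2^i, k, n ∈ ℤ², there exists a constant C_N > 0 (independent of j,ℓ,k,i,m,n,x) such that |(g_{j,ℓ,k} ∗ h_{i,m,n})(x)| ≤ C_N (1 + 2^j |x - A^(-i) B^(-m) n - A^(-j) B^(-ℓ) k|)^(-N) for all x ∈ ℝ². -/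

import Mathlib

open MeasureTheory Metric Set Filter
noncomputable section

/-- `ℝ²` with the Euclidean norm. -/
abbrev V2 := EuclideanSpace ℝ (Fin 2)

/-- the vector `(a, b) ∈ ℝ²`. -/
def v2 (a b : ℝ) : V2 := (WithLp.equiv 2 (Fin 2 → ℝ)).symm ![a, b]

/-- The action of `B^ℓ A^j` on `ℝ²` for `A = diag(4,2)`, `B = [[1,1],[0,1]]`:
`x ↦ (2^(2j) x₁ + 2^j ℓ x₂, 2^j x₂)`. -/
def BA (j : ℕ) (ℓ : ℤ) (x : V2) : V2 :=
  v2 ((2:ℝ)^(2*j) * x 0 + (2:ℝ)^j * (ℓ:ℝ) * x 1) ((2:ℝ)^j * x 1)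

/-- The action of `A^(-j) B^(-ℓ)` on `ℝ²` (the inverse of `BA j ℓ`). -/
def invBA (j : ℕ) (ℓ : ℤ) (x : V2) : V2 :=
  v2 (((2:ℝ)^(2*j))⁻¹ * (x 0 - (ℓ:ℝ) * x 1)) (((2:ℝ)^j)⁻¹ * x 1)

/-- embedding of `ℤ²` into `ℝ²`. -/
def vi (k : ℤ × ℤ) : V2 := v2 (k.1 : ℝ) (k.2 : ℝ)

/-- `g_{j,ℓ,k}(x) = 2^(3j/2) g(B^ℓ A^j x - k)`. -/
def shemel (g : V2 → ℂ) (j : ℕ) (ℓ : ℤ) (k : ℤ × ℤ) (x : V2) : ℂ :=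
  ((2:ℝ) ^ (3*(j:ℝ)/2) : ℝ) * g (BA j ℓ x - vi k)

namespace St3
open ENNReal

lemma rpow_neg_anti {a b : ℝ} (ha : 0 < a) (hab : a ≤ b) {p : ℝ} (hp : 0 ≤ p) :
    b ^ (-p) ≤ a ^ (-p) := by
  have hb : 0 < b := ha.trans_le hab
  rw [Real.rpow_neg ha.le, Real.rpow_neg hb.le]
  have h1 : a ^ p ≤ b ^ p := Real.rpow_le_rpow ha.le hab hp
  have h2 : 0 < a ^ p := Real.rpow_pos_of_pos ha p
  exact inv_anti₀ h2 h1

noncomputable def c1 : ℝ := ∫ a : ℝ, (1 + |a|) ^ (-(3/2) : ℝ)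

lemma integrable_c1 : Integrable (fun a : ℝ => (1 + |a|) ^ (-(3/2) : ℝ)) := by
  have := integrable_one_add_norm (E := ℝ) (μ := volume) (r := 3/2) (by norm_num)
  simpa [Real.norm_eq_abs] using this

lemma c1_nonneg : 0 ≤ c1 := integral_nonneg (fun a => by positivity)

lemma lint_G : (∫⁻ a : ℝ, ENNReal.ofReal ((1 + |a|) ^ (-(3/2) : ℝ))) = ENNReal.ofReal c1 :=
  (ofReal_integral_eq_lintegral_ofReal integrable_c1
    (Filter.Eventually.of_forall fun a => by positivity)).symm

lemma meas_G : Measurable (fun s : ℝ => ENNReal.ofReal ((1 + |s|) ^ (-(3/2) : ℝ))) := by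
  apply ENNReal.measurable_ofReal.comp
  apply Continuous.measurable
  apply Continuous.rpow_const (by continuity)
  intro x; left; positivity

lemma lint_affine (α c : ℝ) (hα : 0 < α) :
    (∫⁻ a : ℝ, ENNReal.ofReal ((1 + |α * a + c|) ^ (-(3/2) : ℝ)))
      = ENNReal.ofReal α⁻¹ * ENNReal.ofReal c1 := by
  have hmes : Measurable (fun a : ℝ => α * a + c) :=
    (measurable_const_mul α).add_const c
  have hmap : Measure.map (fun a : ℝ => α * a + c) volume
      = ENNReal.ofReal α⁻¹ • volume := by
    have hco : (fun a : ℝ => α * a + c) = (fun a : ℝ => a + c) ∘ (fun a : ℝ => α * a) := rfl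
    rw [hco, ← Measure.map_map (measurable_add_const c) (measurable_const_mul α),
      Real.map_volume_mul_left hα.ne', Measure.map_smul, map_add_right_eq_self volume c,
      abs_of_pos (inv_pos.mpr hα)]
  calc (∫⁻ a : ℝ, ENNReal.ofReal ((1 + |α * a + c|) ^ (-(3/2) : ℝ)))
      = ∫⁻ s, ENNReal.ofReal ((1 + |s|) ^ (-(3/2) : ℝ))
          ∂(Measure.map (fun a : ℝ => α * a + c) volume) := by
        rw [lintegral_map meas_G hmes]
    _ = ENNReal.ofReal α⁻¹ * ENNReal.ofReal c1 := by
        rw [hmap, lintegral_smul_measure, lint_G, smul_eq_mul]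

lemma lint_2d (α β γ d1 d2 : ℝ) (hα : 0 < α) (hβ : 0 < β) :
    (∫⁻ t : V2, ENNReal.ofReal ((1 + |α * t 0 + γ * t 1 - d1|) ^ (-(3/2) : ℝ))
        * ENNReal.ofReal ((1 + |β * t 1 - d2|) ^ (-(3/2) : ℝ)))
      = ENNReal.ofReal α⁻¹ * ENNReal.ofReal c1 * (ENNReal.ofReal β⁻¹ * ENNReal.ofReal c1) := by
  set Ψ : ℝ × ℝ → ℝ≥0∞ := fun q =>
    ENNReal.ofReal ((1 + |α * q.1 + γ * q.2 - d1|) ^ (-(3/2) : ℝ))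
      * ENNReal.ofReal ((1 + |β * q.2 - d2|) ^ (-(3/2) : ℝ)) with hΨ
  have hf1 : Measurable fun q : ℝ × ℝ =>
      ENNReal.ofReal ((1 + |α * q.1 + γ * q.2 - d1|) ^ (-(3/2) : ℝ)) := by
    apply ENNReal.measurable_ofReal.comp
    apply Continuous.measurable
    apply Continuous.rpow_const (by continuity)
    intro x; left; positivity
  have hf2 : Measurable fun q : ℝ × ℝ =>
      ENNReal.ofReal ((1 + |β * q.2 - d2|) ^ (-(3/2) : ℝ)) := by
    apply ENNReal.measurable_ofReal.comp
    apply Continuous.measurable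
    apply Continuous.rpow_const (by continuity)
    intro x; left; positivity
  have hmeasΨ : Measurable Ψ := hf1.mul hf2
  have e1 : MeasurePreserving ((MeasurableEquiv.toLp 2 (Fin 2 → ℝ)).symm)
      (volume : Measure V2) volume := EuclideanSpace.volume_preserving_symm_measurableEquiv_toLp _
  have e2 : MeasurePreserving (MeasurableEquiv.piFinTwo (fun _ : Fin 2 => ℝ))
      volume volume := volume_preserving_piFinTwo _
  have step1 : (∫⁻ t : V2, ENNReal.ofReal ((1 + |α * t 0 + γ * t 1 - d1|) ^ (-(3/2) : ℝ))
        * ENNReal.ofReal ((1 + |β * t 1 - d2|) ^ (-(3/2) : ℝ)))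
      = ∫⁻ q : ℝ × ℝ, Ψ q := by
    have h2 : (∫⁻ p : Fin 2 → ℝ, Ψ ((MeasurableEquiv.piFinTwo (fun _ : Fin 2 => ℝ)) p))
        = ∫⁻ q : ℝ × ℝ, Ψ q := e2.lintegral_comp hmeasΨ
    have h1 : (∫⁻ t : V2,
          Ψ ((MeasurableEquiv.piFinTwo (fun _ : Fin 2 => ℝ))
            (((MeasurableEquiv.toLp 2 (Fin 2 → ℝ)).symm) t)))
        = ∫⁻ p : Fin 2 → ℝ, Ψ ((MeasurableEquiv.piFinTwo (fun _ : Fin 2 => ℝ)) p) :=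
      e1.lintegral_comp (hmeasΨ.comp (MeasurableEquiv.piFinTwo _).measurable)
    rw [← h2, ← h1]; rfl
  rw [step1, Measure.volume_eq_prod, lintegral_prod_symm Ψ hmeasΨ.aemeasurable]
  have inner : ∀ y : ℝ, (∫⁻ x : ℝ, Ψ (x, y))
      = ENNReal.ofReal α⁻¹ * ENNReal.ofReal c1
          * ENNReal.ofReal ((1 + |β * y - d2|) ^ (-(3/2) : ℝ)) := by
    intro y
    have hxy : ∀ x : ℝ, Ψ (x, y) = ENNReal.ofReal ((1 + |α * x + (γ * y - d1)|) ^ (-(3/2) : ℝ))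
        * ENNReal.ofReal ((1 + |β * y - d2|) ^ (-(3/2) : ℝ)) := by
      intro x; rw [hΨ]; ring_nf
    simp only [hxy]
    rw [lintegral_mul_const' _ _ (by exact ENNReal.ofReal_ne_top), lint_affine α _ hα]
  calc (∫⁻ y : ℝ, ∫⁻ x : ℝ, Ψ (x, y))
      = ∫⁻ y : ℝ, ENNReal.ofReal α⁻¹ * ENNReal.ofReal c1
          * ENNReal.ofReal ((1 + |β * y - d2|) ^ (-(3/2) : ℝ)) := by
        simp only [inner]
    _ = ENNReal.ofReal α⁻¹ * ENNReal.ofReal c1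
          * (ENNReal.ofReal β⁻¹ * ENNReal.ofReal c1) := by
        rw [lintegral_const_mul' _ _
          (by exact ENNReal.mul_ne_top ENNReal.ofReal_ne_top ENNReal.ofReal_ne_top)]
        congr 1
        have hb : ∀ y : ℝ, (1 : ℝ) + |β * y - d2| = 1 + |β * y + (-d2)| := by
          intro y; ring_nf
        simp only [hb]
        exact lint_affine β (-d2) hβ

set_option maxHeartbeats 1000000 in
lemma keyF {pj pi L M : ℝ} (hpj : 1 ≤ pj) (hpi : 1 ≤ pi) (hL : |L| ≤ pj) (hM : |M| ≤ pi)
    (hji : pj ≤ 2 * pi) (t0 t1 x0 x1 k1 k2 n1 n2 : ℝ) :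
    1 + pj * (|x0 - (pi ^ 2)⁻¹ * (n1 - M * n2) - (pj ^ 2)⁻¹ * (k1 - L * k2)|
        + |x1 - pi⁻¹ * n2 - pj⁻¹ * k2|)
      ≤ 6 * (1 + |pj ^ 2 * t0 + pj * L * t1 - k1| + |pj * t1 - k2|)
          * (1 + |pi ^ 2 * (x0 - t0) + pi * M * (x1 - t1) - n1| + |pi * (x1 - t1) - n2|) := by
  have hpj0 : (0:ℝ) < pj := lt_of_lt_of_le one_pos hpj
  have hpi0 : (0:ℝ) < pi := lt_of_lt_of_le one_pos hpi
  set u0 : ℝ := pj ^ 2 * t0 + pj * L * t1 - k1 with hu0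
  set u1 : ℝ := pj * t1 - k2 with hu1
  set w0 : ℝ := pi ^ 2 * (x0 - t0) + pi * M * (x1 - t1) - n1 with hw0
  set w1 : ℝ := pi * (x1 - t1) - n2 with hw1
  set y0 : ℝ := x0 - (pi ^ 2)⁻¹ * (n1 - M * n2) - (pj ^ 2)⁻¹ * (k1 - L * k2) with hy0
  set y1 : ℝ := x1 - pi⁻¹ * n2 - pj⁻¹ * k2 with hy1
  have e1 : pj * y1 = u1 + (pj / pi) * w1 := by
    rw [hy1, hu1, hw1]; field_simp; ring
  have e0 : pj * y0 = pj⁻¹ * u0 + (pj / pi ^ 2) * w0 - (L / pj) * u1 - (pj * M / pi ^ 2) * w1 := by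
    rw [hy0, hu0, hu1, hw0, hw1]; field_simp; ring
  have habs2 : ∀ A B : ℝ, |A + B| ≤ |A| + |B| := fun A B => abs_add_le A B
  have habs4 : ∀ A B C D : ℝ, |A + B - C - D| ≤ |A| + |B| + |C| + |D| := by
    intro A B C D
    calc |A + B - C - D| ≤ |A + B - C| + |D| := by
          simpa [sub_eq_add_neg, abs_neg] using abs_add_le (A + B - C) (-D)
      _ ≤ |A + B| + |C| + |D| := by
          have : |A + B - C| ≤ |A + B| + |C| := by
            simpa [sub_eq_add_neg, abs_neg] using abs_add_le (A + B) (-C)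
          linarith
      _ ≤ |A| + |B| + |C| + |D| := by have := abs_add_le A B; linarith
  have c1 : |pj⁻¹| ≤ 1 := by
    rw [abs_of_pos (inv_pos.mpr hpj0)]; exact inv_le_one_of_one_le₀ hpj
  have c2 : |pj / pi ^ 2| ≤ 2 := by
    rw [abs_of_pos (by positivity)]
    rw [div_le_iff₀ (by positivity)]
    nlinarith
  have c3 : |L / pj| ≤ 1 := by
    rw [abs_div, abs_of_pos hpj0, div_le_one hpj0]; exact hL
  have c4 : |pj * M / pi ^ 2| ≤ 2 := by
    rw [abs_div, abs_mul, abs_of_pos hpj0, abs_of_pos (by positivity : (0:ℝ) < pi ^ 2)]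
    rw [div_le_iff₀ (by positivity)]
    nlinarith [abs_nonneg M]
  have c5 : |pj / pi| ≤ 2 := by
    rw [abs_of_pos (by positivity), div_le_iff₀ hpi0]; linarith
  have hb1 : |pj * y1| ≤ |u1| + 2 * |w1| := by
    rw [e1]
    calc |u1 + (pj / pi) * w1| ≤ |u1| + |(pj / pi) * w1| := habs2 _ _
      _ = |u1| + |pj / pi| * |w1| := by rw [abs_mul]
      _ ≤ |u1| + 2 * |w1| := by nlinarith [abs_nonneg w1]
  have hb0 : |pj * y0| ≤ |u0| + 2 * |w0| + |u1| + 2 * |w1| := by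
    rw [e0]
    calc |pj⁻¹ * u0 + (pj / pi ^ 2) * w0 - (L / pj) * u1 - (pj * M / pi ^ 2) * w1|
        ≤ |pj⁻¹ * u0| + |(pj / pi ^ 2) * w0| + |(L / pj) * u1| + |(pj * M / pi ^ 2) * w1| :=
          habs4 _ _ _ _
      _ = |pj⁻¹| * |u0| + |pj / pi ^ 2| * |w0| + |L / pj| * |u1| + |pj * M / pi ^ 2| * |w1| := by
          rw [abs_mul, abs_mul, abs_mul, abs_mul]
      _ ≤ |u0| + 2 * |w0| + |u1| + 2 * |w1| := by
          nlinarith [abs_nonneg u0, abs_nonneg w0, abs_nonneg u1, abs_nonneg w1]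
  have expand : pj * (|y0| + |y1|) = |pj * y0| + |pj * y1| := by
    rw [mul_add, abs_mul, abs_mul, abs_of_pos hpj0]
  rw [expand]
  nlinarith [abs_nonneg u0, abs_nonneg u1, abs_nonneg w0, abs_nonneg w1, hb0, hb1,
    mul_nonneg (add_nonneg (abs_nonneg u0) (abs_nonneg u1))
      (add_nonneg (abs_nonneg w0) (abs_nonneg w1))]

lemma schwartz_decay (f : SchwartzMap V2 ℂ) (K : ℝ) (hK : 0 ≤ K) :
    ∃ C, 0 < C ∧ ∀ u : V2, ‖f u‖ ≤ C * (1 + ‖u‖) ^ (-K) := by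
  set k : ℕ := ⌈K⌉₊ with hk
  have hbound := fun x : V2 => SchwartzMap.one_add_le_sup_seminorm_apply (𝕜 := ℝ)
    (m := (k, 0)) (k := k) (n := 0) le_rfl le_rfl f x
  set C0 : ℝ := 2 ^ k * (Finset.Iic (k, 0)).sup (fun m => SchwartzMap.seminorm ℝ m.1 m.2) f
    with hC0
  have hC0nn : 0 ≤ C0 := by
    have h0 := hbound 0
    have : (0:ℝ) ≤ (1 + ‖(0:V2)‖) ^ k * ‖iteratedFDeriv ℝ 0 (⇑f) 0‖ := by positivity
    linarith
  refine ⟨C0 + 1, by positivity, fun u => ?_⟩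
  have h1u : (0:ℝ) < 1 + ‖u‖ := by positivity
  have h := hbound u
  rw [norm_iteratedFDeriv_zero] at h
  have step1 : ‖f u‖ ≤ C0 * (1 + ‖u‖) ^ (-(k:ℝ)) := by
    rw [Real.rpow_neg h1u.le, Real.rpow_natCast]
    rw [mul_comm ((1 + ‖u‖) ^ k) (‖f u‖)] at h
    calc ‖f u‖ = ‖f u‖ * (1 + ‖u‖) ^ k * ((1 + ‖u‖) ^ k)⁻¹ := by
          field_simp
      _ ≤ C0 * ((1 + ‖u‖) ^ k)⁻¹ := by
          apply mul_le_mul_of_nonneg_right h (by positivity)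
  have step2 : (1 + ‖u‖) ^ (-(k:ℝ)) ≤ (1 + ‖u‖) ^ (-K) := by
    apply Real.rpow_le_rpow_of_exponent_le (by nlinarith [norm_nonneg u])
    simp only [neg_le_neg_iff]
    exact Nat.le_ceil K
  calc ‖f u‖ ≤ C0 * (1 + ‖u‖) ^ (-(k:ℝ)) := step1
    _ ≤ C0 * (1 + ‖u‖) ^ (-K) := by
        apply mul_le_mul_of_nonneg_left step2 hC0nn
    _ ≤ (C0 + 1) * (1 + ‖u‖) ^ (-K) := by
        have : (0:ℝ) ≤ (1 + ‖u‖) ^ (-K) := by positivity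
        nlinarith

lemma prod_step {N : ℝ} (hN : 0 ≤ N) {nu nw Z : ℝ} (hnu : 0 ≤ nu) (hnw : 0 ≤ nw)
    (hZ : 0 < Z) (hkey : Z ≤ 24 * ((1 + nu) * (1 + nw))) :
    (1 + nu) ^ (-N) * (1 + nw) ^ (-N) ≤ 24 ^ N * Z ^ (-N) := by
  have h1 : (0:ℝ) < (1 + nu) * (1 + nw) := by positivity
  have h2 : (24 * ((1 + nu) * (1 + nw))) ^ (-N) ≤ Z ^ (-N) := rpow_neg_anti hZ hkey hN
  have h3 : (24 * ((1 + nu) * (1 + nw))) ^ (-N)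
      = (24:ℝ) ^ (-N) * ((1 + nu) ^ (-N) * (1 + nw) ^ (-N)) := by
    rw [Real.mul_rpow (by norm_num) h1.le, Real.mul_rpow (by positivity) (by positivity)]
  have h24 : (24:ℝ) ^ N * (24:ℝ) ^ (-N) = 1 := by
    rw [← Real.rpow_add (by norm_num : (0:ℝ) < 24)]; simp
  calc (1 + nu) ^ (-N) * (1 + nw) ^ (-N)
      = (24:ℝ) ^ N * ((24 * ((1 + nu) * (1 + nw))) ^ (-N)) := by
        rw [h3, ← mul_assoc, h24, one_mul]
    _ ≤ 24 ^ N * Z ^ (-N) := by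
        apply mul_le_mul_of_nonneg_left h2 (by positivity)

lemma split3 {a : ℝ} (ha : 0 ≤ a) {s0 s1 : ℝ} (hs0 : 0 ≤ s0) (hs1 : 0 ≤ s1)
    (hle : 1 + s0 + s1 ≤ 2 * (1 + a)) :
    (1 + a) ^ (-(3:ℝ)) ≤ 8 * ((1 + s0) ^ (-(3/2):ℝ) * (1 + s1) ^ (-(3/2):ℝ)) := by
  have h1 : (0:ℝ) < 1 + s0 + s1 := by linarith
  have step1 : (1 + a) ^ (-(3:ℝ)) ≤ ((1 + s0 + s1) / 2) ^ (-(3:ℝ)) :=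
    rpow_neg_anti (by positivity) (by linarith) (by norm_num)
  have h8 : ((2:ℝ)⁻¹) ^ (-(3:ℝ)) = 8 := by
    rw [Real.inv_rpow (by norm_num), Real.rpow_neg (by norm_num), inv_inv,
      show (3:ℝ) = ((3:ℕ):ℝ) by norm_num, Real.rpow_natCast]
    norm_num
  have step2 : ((1 + s0 + s1) / 2) ^ (-(3:ℝ)) = 8 * (1 + s0 + s1) ^ (-(3:ℝ)) := by
    rw [div_eq_mul_inv, Real.mul_rpow h1.le (by norm_num), h8, mul_comm]
  have hprod : (1 + s0) * (1 + s1) ≤ (1 + s0 + s1) ^ (2:ℕ) := by nlinarith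
  have step3 : (1 + s0 + s1) ^ (-(3:ℝ)) ≤ (1 + s0) ^ (-(3/2):ℝ) * (1 + s1) ^ (-(3/2):ℝ) := by
    have hb : ((1 + s0 + s1) ^ (2:ℕ) : ℝ) ^ (-(3/2):ℝ) ≤ ((1 + s0) * (1 + s1)) ^ (-(3/2):ℝ) :=
      rpow_neg_anti (by positivity) hprod (by norm_num)
    have heq1 : ((1 + s0 + s1) ^ (2:ℕ) : ℝ) ^ (-(3/2):ℝ) = (1 + s0 + s1) ^ (-(3:ℝ)) := by
      rw [← Real.rpow_natCast (1 + s0 + s1) 2, ← Real.rpow_mul h1.le]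
      norm_num
    have heq2 : ((1 + s0) * (1 + s1)) ^ (-(3/2):ℝ)
        = (1 + s0) ^ (-(3/2):ℝ) * (1 + s1) ^ (-(3/2):ℝ) :=
      Real.mul_rpow (by positivity) (by positivity)
    rw [heq1, heq2] at hb
    exact hb
  calc (1 + a) ^ (-(3:ℝ)) ≤ ((1 + s0 + s1) / 2) ^ (-(3:ℝ)) := step1
    _ = 8 * (1 + s0 + s1) ^ (-(3:ℝ)) := step2
    _ ≤ 8 * ((1 + s0) ^ (-(3/2):ℝ) * (1 + s1) ^ (-(3/2):ℝ)) := by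
        apply mul_le_mul_of_nonneg_left step3 (by norm_num)

lemma coordnorm (z : V2) : |z 0| ≤ ‖z‖ ∧ |z 1| ≤ ‖z‖ ∧ ‖z‖ ≤ |z 0| + |z 1| := by
  have hz : ‖z‖ = Real.sqrt (|z 0| ^ 2 + |z 1| ^ 2) := by
    rw [EuclideanSpace.norm_eq]; simp [Fin.sum_univ_two]
  refine ⟨?_, ?_, ?_⟩
  · calc |z 0| = Real.sqrt (|z 0| ^ 2) := (Real.sqrt_sq (abs_nonneg _)).symm
      _ ≤ Real.sqrt (|z 0| ^ 2 + |z 1| ^ 2) := Real.sqrt_le_sqrt (by nlinarith [sq_nonneg (|z 1|)])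
      _ = ‖z‖ := hz.symm
  · calc |z 1| = Real.sqrt (|z 1| ^ 2) := (Real.sqrt_sq (abs_nonneg _)).symm
      _ ≤ Real.sqrt (|z 0| ^ 2 + |z 1| ^ 2) := Real.sqrt_le_sqrt (by nlinarith [sq_nonneg (|z 0|)])
      _ = ‖z‖ := hz.symm
  · calc ‖z‖ = Real.sqrt (|z 0| ^ 2 + |z 1| ^ 2) := hz
      _ ≤ Real.sqrt ((|z 0| + |z 1|) ^ 2) :=
          Real.sqrt_le_sqrt (by nlinarith [abs_nonneg (z 0), abs_nonneg (z 1)])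
      _ = |z 0| + |z 1| := Real.sqrt_sq (by positivity)

end St3

set_option maxHeartbeats 2000000 in
/-- almost orthogonality of the shear anisotropic system:
for Schwartz `g, h`, `N > 2`, neighbouring scales `i ∈ {j-1,j,j+1}` and all shear and
translation parameters, `|(g_{j,ℓ,k} ∗ h_{i,m,n})(x)| ≤ C_N (1+2^j|x - x_Q - x_P|)^(-N)`. -/
theorem stmt3 (g h : SchwartzMap V2 ℂ) (N : ℝ) (hN : N > 2) :
    ∃ C > 0, ∀ (j i : ℕ) (ℓ m : ℤ) (k n : ℤ × ℤ),
      ((i:ℤ) = (j:ℤ) - 1 ∨ (i:ℤ) = (j:ℤ) ∨ (i:ℤ) = (j:ℤ) + 1) →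
      |ℓ| ≤ 2^j → |m| ≤ 2^i →
      ∀ x : V2,
        ‖convolution (shemel (fun y => g y) j ℓ k) (shemel (fun y => h y) i m n)
            (ContinuousLinearMap.mul ℂ ℂ) volume x‖ ≤
          C * (1 + (2:ℝ)^j * ‖x - invBA i m (vi n) - invBA j ℓ (vi k)‖) ^ (-N) := by
  obtain ⟨Cg, hCg, hgd⟩ := St3.schwartz_decay g (N + 3) (by linarith)
  obtain ⟨Ch, hCh, hhd⟩ := St3.schwartz_decay h (N + 3) (by linarith)
  have hNn : (0:ℝ) ≤ N := by linarith
  refine ⟨2 ^ ((3:ℝ)/2) * (Cg * Ch) * 24 ^ N * (8 * (St3.c1 ^ 2 + 1)), by positivity,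
    ?_⟩
  intro j i ℓ m k n hij hℓ hm x
  set Qj : ℝ := (2:ℝ) ^ j with hQj
  set Qi : ℝ := (2:ℝ) ^ i with hQi
  have hQj1 : (1:ℝ) ≤ Qj := one_le_pow₀ one_le_two
  have hQi1 : (1:ℝ) ≤ Qi := one_le_pow₀ one_le_two
  have hQj0 : (0:ℝ) < Qj := lt_of_lt_of_le one_pos hQj1
  have hQi0 : (0:ℝ) < Qi := lt_of_lt_of_le one_pos hQi1
  have hij1 : i ≤ j + 1 := by rcases hij with h' | h' | h' <;> omega
  have hij2 : j ≤ i + 1 := by rcases hij with h' | h' | h' <;> omega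
  have hQjQi : Qj ≤ 2 * Qi := by
    rw [hQj, hQi]
    calc (2:ℝ) ^ j ≤ (2:ℝ) ^ (i + 1) := pow_le_pow_right₀ one_le_two hij2
      _ = 2 * 2 ^ i := by ring
  have hLr : |(ℓ:ℝ)| ≤ Qj := by
    have h' : ((|ℓ| : ℤ) : ℝ) ≤ (((2:ℤ)^j : ℤ) : ℝ) := by exact_mod_cast hℓ
    push_cast at h'
    rw [hQj]; exact h'
  have hMr : |(m:ℝ)| ≤ Qi := by
    have h' : ((|m| : ℤ) : ℝ) ≤ (((2:ℤ)^i : ℤ) : ℝ) := by exact_mod_cast hm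
    push_cast at h'
    rw [hQi]; exact h'
  have h2j : (2:ℝ) ^ (2*j) = Qj ^ 2 := by rw [hQj, two_mul, pow_add, sq]
  have h2i : (2:ℝ) ^ (2*i) = Qi ^ 2 := by rw [hQi, two_mul, pow_add, sq]
  set y : V2 := x - invBA i m (vi n) - invBA j ℓ (vi k) with hy
  set S : ℝ := |y 0| + |y 1| with hS
  have hy0 : y 0 = x 0 - (Qi ^ 2)⁻¹ * ((n.1:ℝ) - (m:ℝ) * (n.2:ℝ))
      - (Qj ^ 2)⁻¹ * ((k.1:ℝ) - (ℓ:ℝ) * (k.2:ℝ)) := by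
    show x 0 - ((2:ℝ) ^ (2*i))⁻¹ * ((n.1:ℝ) - (m:ℝ) * (n.2:ℝ))
      - ((2:ℝ) ^ (2*j))⁻¹ * ((k.1:ℝ) - (ℓ:ℝ) * (k.2:ℝ)) = _
    rw [h2i, h2j]
  have hy1 : y 1 = x 1 - Qi⁻¹ * (n.2:ℝ) - Qj⁻¹ * (k.2:ℝ) := by
    show x 1 - ((2:ℝ) ^ i)⁻¹ * (n.2:ℝ) - ((2:ℝ) ^ j)⁻¹ * (k.2:ℝ) = _
    rw [← hQj, ← hQi]
  have hSnn : 0 ≤ S := by rw [hS]; positivity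
  have hSy : ‖y‖ ≤ S := by rw [hS]; exact (St3.coordnorm y).2.2
  have hbase : (0:ℝ) < 1 + Qj * S := by nlinarith
  have hbase' : (0:ℝ) < 1 + Qj * ‖y‖ := by nlinarith [norm_nonneg y]
  have hrS : (0:ℝ) ≤ (1 + Qj * S) ^ (-N) := Real.rpow_nonneg hbase.le _
  set Preal : ℝ := (2:ℝ) ^ (3*(j:ℝ)/2) * (2:ℝ) ^ (3*(i:ℝ)/2) * Cg * Ch * 24 ^ N
      * (1 + Qj * S) ^ (-N) * 8 with hPreal
  have hP1nn : (0:ℝ) ≤ (2:ℝ) ^ (3*(j:ℝ)/2) * (2:ℝ) ^ (3*(i:ℝ)/2) * Cg * Ch * 24 ^ N := by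
    have := hCg.le; have := hCh.le; positivity
  have hPrealnn : 0 ≤ Preal := by
    rw [hPreal]
    exact mul_nonneg (mul_nonneg hP1nn hrS) (by norm_num)
  -- pointwise bound
  have hpoint : ∀ t : V2,
      ENNReal.ofReal ‖(ContinuousLinearMap.mul ℂ ℂ) (shemel (fun y' => g y') j ℓ k t)
          (shemel (fun y' => h y') i m n (x - t))‖
        ≤ ENNReal.ofReal Preal *
            (ENNReal.ofReal ((1 + |Qj ^ 2 * t 0 + Qj * (ℓ:ℝ) * t 1 - (k.1:ℝ)|) ^ (-(3/2):ℝ)) *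
             ENNReal.ofReal ((1 + |Qj * t 1 - (k.2:ℝ)|) ^ (-(3/2):ℝ))) := by
    intro t
    set u : V2 := BA j ℓ t - vi k with hu
    set w : V2 := BA i m (x - t) - vi n with hw
    have hu0 : u 0 = Qj ^ 2 * t 0 + Qj * (ℓ:ℝ) * t 1 - (k.1:ℝ) := by
      show (2:ℝ) ^ (2*j) * t 0 + (2:ℝ) ^ j * (ℓ:ℝ) * t 1 - (k.1:ℝ) = _
      rw [h2j, ← hQj]
    have hu1 : u 1 = Qj * t 1 - (k.2:ℝ) := by
      show (2:ℝ) ^ j * t 1 - (k.2:ℝ) = _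
      rw [← hQj]
    have hw0 : w 0 = Qi ^ 2 * (x 0 - t 0) + Qi * (m:ℝ) * (x 1 - t 1) - (n.1:ℝ) := by
      show (2:ℝ) ^ (2*i) * (x 0 - t 0) + (2:ℝ) ^ i * (m:ℝ) * (x 1 - t 1) - (n.1:ℝ) = _
      rw [h2i, ← hQi]
    have hw1 : w 1 = Qi * (x 1 - t 1) - (n.2:ℝ) := by
      show (2:ℝ) ^ i * (x 1 - t 1) - (n.2:ℝ) = _
      rw [← hQi]
    have hXle : 1 + |u 0| + |u 1| ≤ 2 * (1 + ‖u‖) := by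
      have h0 := (St3.coordnorm u).1; have h1 := (St3.coordnorm u).2.1; linarith
    have hYle : 1 + |w 0| + |w 1| ≤ 2 * (1 + ‖w‖) := by
      have h0 := (St3.coordnorm w).1; have h1 := (St3.coordnorm w).2.1; linarith
    have hkey : 1 + Qj * S ≤ 24 * ((1 + ‖u‖) * (1 + ‖w‖)) := by
      have hk := St3.keyF hQj1 hQi1 hLr hMr hQjQi (t 0) (t 1) (x 0) (x 1)
        (k.1:ℝ) (k.2:ℝ) (n.1:ℝ) (n.2:ℝ)
      rw [← hu0, ← hu1, ← hw0, ← hw1] at hk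
      have hkS : 1 + Qj * S ≤ 6 * (1 + |u 0| + |u 1|) * (1 + |w 0| + |w 1|) := by
        rw [hS, hy0, hy1]; exact hk
      calc 1 + Qj * S ≤ 6 * (1 + |u 0| + |u 1|) * (1 + |w 0| + |w 1|) := hkS
        _ = 6 * ((1 + |u 0| + |u 1|) * (1 + |w 0| + |w 1|)) := by ring
        _ ≤ 6 * ((2 * (1 + ‖u‖)) * (2 * (1 + ‖w‖))) := by
            apply mul_le_mul_of_nonneg_left _ (by norm_num)
            apply mul_le_mul hXle hYle (by positivity) (by positivity)
        _ = 24 * ((1 + ‖u‖) * (1 + ‖w‖)) := by ring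
    have hnormprod : ‖(ContinuousLinearMap.mul ℂ ℂ) (shemel (fun y' => g y') j ℓ k t)
          (shemel (fun y' => h y') i m n (x - t))‖
        = (2:ℝ) ^ (3*(j:ℝ)/2) * (2:ℝ) ^ (3*(i:ℝ)/2) * (‖g u‖ * ‖h w‖) := by
      simp only [ContinuousLinearMap.mul_apply', shemel, norm_mul, Complex.norm_real,
        Real.norm_eq_abs, ← hu, ← hw]
      rw [abs_of_pos (Real.rpow_pos_of_pos two_pos _),
        abs_of_pos (Real.rpow_pos_of_pos two_pos _)]
      ring
    have hu' : (0:ℝ) < 1 + ‖u‖ := by positivity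
    have hw' : (0:ℝ) < 1 + ‖w‖ := by positivity
    have hsplitu : (1 + ‖u‖) ^ (-(N+3)) = (1 + ‖u‖) ^ (-N) * (1 + ‖u‖) ^ (-(3:ℝ)) := by
      rw [← Real.rpow_add hu']; ring_nf
    have hsplitw : (1 + ‖w‖) ^ (-(N+3)) = (1 + ‖w‖) ^ (-N) * (1 + ‖w‖) ^ (-(3:ℝ)) := by
      rw [← Real.rpow_add hw']; ring_nf
    have hprod : (1 + ‖u‖) ^ (-N) * (1 + ‖w‖) ^ (-N) ≤ 24 ^ N * (1 + Qj * S) ^ (-N) :=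
      St3.prod_step hNn (norm_nonneg u) (norm_nonneg w) hbase hkey
    have hw3 : (1 + ‖w‖) ^ (-(3:ℝ)) ≤ 1 :=
      Real.rpow_le_one_of_one_le_of_nonpos (by nlinarith [norm_nonneg w]) (by norm_num)
    have hu3 : (1 + ‖u‖) ^ (-(3:ℝ))
        ≤ 8 * ((1 + |u 0|) ^ (-(3/2):ℝ) * (1 + |u 1|) ^ (-(3/2):ℝ)) :=
      St3.split3 (norm_nonneg u) (abs_nonneg _) (abs_nonneg _) hXle
    have hq0nn : (0:ℝ) ≤ (1 + |u 0|) ^ (-(3/2):ℝ) := Real.rpow_nonneg (by positivity) _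
    have hq1nn : (0:ℝ) ≤ (1 + |u 1|) ^ (-(3/2):ℝ) := Real.rpow_nonneg (by positivity) _
    have ha1nn : (0:ℝ) ≤ (1 + ‖u‖) ^ (-(3:ℝ)) := Real.rpow_nonneg hu'.le _
    have ha3nn : (0:ℝ) ≤ (1 + ‖w‖) ^ (-(3:ℝ)) := Real.rpow_nonneg hw'.le _
    have hb1nn : (0:ℝ) ≤ (24:ℝ) ^ N * (1 + Qj * S) ^ (-N) := by positivity
    have hb2nn : (0:ℝ) ≤ 8 * ((1 + |u 0|) ^ (-(3/2):ℝ) * (1 + |u 1|) ^ (-(3/2):ℝ)) := by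
      nlinarith [mul_nonneg hq0nn hq1nn]
    have h12 : ((1 + ‖u‖) ^ (-N) * (1 + ‖w‖) ^ (-N)) * ((1 + ‖u‖) ^ (-(3:ℝ)))
        ≤ (24 ^ N * (1 + Qj * S) ^ (-N))
            * (8 * ((1 + |u 0|) ^ (-(3/2):ℝ) * (1 + |u 1|) ^ (-(3/2):ℝ))) :=
      mul_le_mul hprod hu3 ha1nn hb1nn
    have h123 : ((1 + ‖u‖) ^ (-N) * (1 + ‖w‖) ^ (-N)) * ((1 + ‖u‖) ^ (-(3:ℝ)))
          * ((1 + ‖w‖) ^ (-(3:ℝ)))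
        ≤ (24 ^ N * (1 + Qj * S) ^ (-N))
            * (8 * ((1 + |u 0|) ^ (-(3/2):ℝ) * (1 + |u 1|) ^ (-(3/2):ℝ))) * 1 :=
      mul_le_mul h12 hw3 ha3nn (mul_nonneg hb1nn hb2nn)
    have hCgCh : (0:ℝ) ≤ (2:ℝ) ^ (3*(j:ℝ)/2) * (2:ℝ) ^ (3*(i:ℝ)/2) * Cg * Ch := by
      have := hCg.le; have := hCh.le; positivity
    have hreal : ‖(ContinuousLinearMap.mul ℂ ℂ) (shemel (fun y' => g y') j ℓ k t)
          (shemel (fun y' => h y') i m n (x - t))‖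
        ≤ Preal * ((1 + |u 0|) ^ (-(3/2):ℝ) * (1 + |u 1|) ^ (-(3/2):ℝ)) := by
      rw [hnormprod]
      calc (2:ℝ) ^ (3*(j:ℝ)/2) * (2:ℝ) ^ (3*(i:ℝ)/2) * (‖g u‖ * ‖h w‖)
          ≤ (2:ℝ) ^ (3*(j:ℝ)/2) * (2:ℝ) ^ (3*(i:ℝ)/2)
              * ((Cg * (1 + ‖u‖) ^ (-(N+3))) * (Ch * (1 + ‖w‖) ^ (-(N+3)))) := by
            apply mul_le_mul_of_nonneg_left _ (by positivity)
            exact mul_le_mul (hgd u) (hhd w) (norm_nonneg _)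
              (by positivity)
        _ = ((2:ℝ) ^ (3*(j:ℝ)/2) * (2:ℝ) ^ (3*(i:ℝ)/2) * Cg * Ch)
              * (((1 + ‖u‖) ^ (-N) * (1 + ‖w‖) ^ (-N)) * ((1 + ‖u‖) ^ (-(3:ℝ)))
                  * ((1 + ‖w‖) ^ (-(3:ℝ)))) := by
            rw [hsplitu, hsplitw]; ring
        _ ≤ ((2:ℝ) ^ (3*(j:ℝ)/2) * (2:ℝ) ^ (3*(i:ℝ)/2) * Cg * Ch)
              * ((24 ^ N * (1 + Qj * S) ^ (-N))
                  * (8 * ((1 + |u 0|) ^ (-(3/2):ℝ) * (1 + |u 1|) ^ (-(3/2):ℝ))) * 1) :=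
            mul_le_mul_of_nonneg_left h123 hCgCh
        _ = Preal * ((1 + |u 0|) ^ (-(3/2):ℝ) * (1 + |u 1|) ^ (-(3/2):ℝ)) := by
            rw [hPreal]; ring
    calc ENNReal.ofReal ‖(ContinuousLinearMap.mul ℂ ℂ) (shemel (fun y' => g y') j ℓ k t)
          (shemel (fun y' => h y') i m n (x - t))‖
        ≤ ENNReal.ofReal (Preal * ((1 + |u 0|) ^ (-(3/2):ℝ) * (1 + |u 1|) ^ (-(3/2):ℝ))) :=
          ENNReal.ofReal_le_ofReal hreal
      _ = ENNReal.ofReal Preal *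
            (ENNReal.ofReal ((1 + |u 0|) ^ (-(3/2):ℝ)) *
             ENNReal.ofReal ((1 + |u 1|) ^ (-(3/2):ℝ))) := by
          rw [ENNReal.ofReal_mul hPrealnn, ENNReal.ofReal_mul hq0nn]
      _ = ENNReal.ofReal Preal *
            (ENNReal.ofReal ((1 + |Qj ^ 2 * t 0 + Qj * (ℓ:ℝ) * t 1 - (k.1:ℝ)|) ^ (-(3/2):ℝ)) *
             ENNReal.ofReal ((1 + |Qj * t 1 - (k.2:ℝ)|) ^ (-(3/2):ℝ))) := by
          rw [hu0, hu1]
  -- assemble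
  rw [convolution_def]
  refine le_trans (norm_integral_le_lintegral_norm _) ?_
  have hrY : (0:ℝ) ≤ (1 + Qj * ‖y‖) ^ (-N) := Real.rpow_nonneg hbase'.le _
  have hRHSnn : (0:ℝ) ≤ 2 ^ ((3:ℝ)/2) * (Cg * Ch) * 24 ^ N * (8 * (St3.c1 ^ 2 + 1))
      * (1 + Qj * ‖y‖) ^ (-N) := by
    have h1 : (0:ℝ) ≤ 2 ^ ((3:ℝ)/2) * (Cg * Ch) * 24 ^ N * (8 * (St3.c1 ^ 2 + 1)) := by
      have := hCg.le; have := hCh.le; positivity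
    exact mul_nonneg h1 hrY
  apply ENNReal.toReal_le_of_le_ofReal hRHSnn
  have hint : (∫⁻ t : V2,
        ENNReal.ofReal ((1 + |Qj ^ 2 * t 0 + Qj * (ℓ:ℝ) * t 1 - (k.1:ℝ)|) ^ (-(3/2):ℝ)) *
        ENNReal.ofReal ((1 + |Qj * t 1 - (k.2:ℝ)|) ^ (-(3/2):ℝ)))
      = ENNReal.ofReal (Qj ^ 2)⁻¹ * ENNReal.ofReal St3.c1
          * (ENNReal.ofReal Qj⁻¹ * ENNReal.ofReal St3.c1) :=
    St3.lint_2d (Qj ^ 2) Qj (Qj * (ℓ:ℝ)) (k.1:ℝ) (k.2:ℝ) (by positivity) hQj0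
  calc (∫⁻ t : V2, ENNReal.ofReal ‖(ContinuousLinearMap.mul ℂ ℂ)
          (shemel (fun y' => g y') j ℓ k t) (shemel (fun y' => h y') i m n (x - t))‖)
      ≤ ∫⁻ t : V2, ENNReal.ofReal Preal *
          (ENNReal.ofReal ((1 + |Qj ^ 2 * t 0 + Qj * (ℓ:ℝ) * t 1 - (k.1:ℝ)|) ^ (-(3/2):ℝ)) *
           ENNReal.ofReal ((1 + |Qj * t 1 - (k.2:ℝ)|) ^ (-(3/2):ℝ))) := lintegral_mono hpoint
    _ = ENNReal.ofReal Preal * ∫⁻ t : V2,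
          (ENNReal.ofReal ((1 + |Qj ^ 2 * t 0 + Qj * (ℓ:ℝ) * t 1 - (k.1:ℝ)|) ^ (-(3/2):ℝ)) *
           ENNReal.ofReal ((1 + |Qj * t 1 - (k.2:ℝ)|) ^ (-(3/2):ℝ))) :=
        lintegral_const_mul' _ _ ENNReal.ofReal_ne_top
    _ = ENNReal.ofReal Preal * (ENNReal.ofReal (Qj ^ 2)⁻¹ * ENNReal.ofReal St3.c1
          * (ENNReal.ofReal Qj⁻¹ * ENNReal.ofReal St3.c1)) := by rw [hint]
    _ = ENNReal.ofReal (Preal * ((Qj ^ 2)⁻¹ * St3.c1 * (Qj⁻¹ * St3.c1))) := by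
        rw [← ENNReal.ofReal_mul (by positivity : (0:ℝ) ≤ (Qj ^ 2)⁻¹),
          ← ENNReal.ofReal_mul (inv_nonneg.mpr hQj0.le),
          ← ENNReal.ofReal_mul (mul_nonneg (by positivity) St3.c1_nonneg),
          ← ENNReal.ofReal_mul hPrealnn]
    _ ≤ ENNReal.ofReal (2 ^ ((3:ℝ)/2) * (Cg * Ch) * 24 ^ N * (8 * (St3.c1 ^ 2 + 1))
          * (1 + Qj * ‖y‖) ^ (-N)) := ?_
  apply ENNReal.ofReal_le_ofReal
  -- final real inequality
  have hQjr : Qj = (2:ℝ) ^ ((j:ℝ)) := by rw [hQj, ← Real.rpow_natCast]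
  have hD : (2:ℝ) ^ (3*(j:ℝ)/2) * (2:ℝ) ^ (3*(i:ℝ)/2) * ((Qj ^ 2)⁻¹ * Qj⁻¹)
      ≤ 2 ^ ((3:ℝ)/2) := by
    have key4 : (2:ℝ) ^ (3*(j:ℝ)/2) * (2:ℝ) ^ (3*(i:ℝ)/2) * ((Qj ^ 2)⁻¹ * Qj⁻¹)
        = (2:ℝ) ^ (3*(i:ℝ)/2 - 3*(j:ℝ)/2) := by
      rw [hQjr]
      rw [← Real.rpow_natCast ((2:ℝ) ^ ((j:ℝ))) 2]
      rw [← Real.rpow_mul (by norm_num : (0:ℝ) ≤ 2)]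
      rw [← Real.rpow_neg (by norm_num : (0:ℝ) ≤ 2), ← Real.rpow_neg (by norm_num : (0:ℝ) ≤ 2)]
      rw [← Real.rpow_add two_pos, ← Real.rpow_add two_pos, ← Real.rpow_add two_pos]
      congr 1
      push_cast
      ring
    rw [key4]
    apply Real.rpow_le_rpow_of_exponent_le one_le_two
    have hii : (i:ℝ) ≤ (j:ℝ) + 1 := by exact_mod_cast hij1
    linarith
  have hstepS : (1 + Qj * S) ^ (-N) ≤ (1 + Qj * ‖y‖) ^ (-N) :=
    St3.rpow_neg_anti hbase' (by nlinarith) hNn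
  have hc2 : St3.c1 ^ 2 * (1 + Qj * S) ^ (-N) ≤ (St3.c1 ^ 2 + 1) * (1 + Qj * ‖y‖) ^ (-N) :=
    mul_le_mul (by nlinarith [sq_nonneg St3.c1]) hstepS hrS (by positivity)
  have hR1nn : (0:ℝ) ≤ Cg * Ch * 24 ^ N * 8 * (St3.c1 ^ 2 * (1 + Qj * S) ^ (-N)) := by
    have h1 : (0:ℝ) ≤ Cg * Ch * 24 ^ N * 8 := by
      have := hCg.le; have := hCh.le; positivity
    exact mul_nonneg h1 (mul_nonneg (sq_nonneg _) hrS)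
  calc Preal * ((Qj ^ 2)⁻¹ * St3.c1 * (Qj⁻¹ * St3.c1))
      = ((2:ℝ) ^ (3*(j:ℝ)/2) * (2:ℝ) ^ (3*(i:ℝ)/2) * ((Qj ^ 2)⁻¹ * Qj⁻¹))
          * (Cg * Ch * 24 ^ N * 8 * (St3.c1 ^ 2 * (1 + Qj * S) ^ (-N))) := by
        rw [hPreal]; ring
    _ ≤ 2 ^ ((3:ℝ)/2) * (Cg * Ch * 24 ^ N * 8 * (St3.c1 ^ 2 * (1 + Qj * S) ^ (-N))) :=
        mul_le_mul_of_nonneg_right hD hR1nn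
    _ ≤ 2 ^ ((3:ℝ)/2) * (Cg * Ch * 24 ^ N * 8 * ((St3.c1 ^ 2 + 1) * (1 + Qj * ‖y‖) ^ (-N))) := by
        apply mul_le_mul_of_nonneg_left _ (by positivity)
        apply mul_le_mul_of_nonneg_left hc2
        have := hCg.le; have := hCh.le; positivity
    _ = 2 ^ ((3:ℝ)/2) * (Cg * Ch) * 24 ^ N * (8 * (St3.c1 ^ 2 + 1))
          * (1 + Qj * ‖y‖) ^ (-N) := by ring
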